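/- (Binet's formula for Euler's constant) γ = ∫₀^∞ ( e^{−x}/(1 − e^{−x}) − e^{−x}/x ) dx, where γ is the Euler–Mascheroni constant. -/

import Mathlib

open MeasureTheory Set Filter Real


lemma gammaDeriv : HasDerivAt Real.Gamma (∫ t in Set.Ioi (0:ℝ), Real.log t * Real.exp (-t)) 1 := by
  have hc := Complex.hasDerivAt_GammaIntegral (s := 1) (by norm_num)
  have heq : (∫ t : ℝ in Ioi 0, (t:ℂ) ^ ((1:ℂ) - 1) * (Real.log t * Real.exp (-t)))
      = ((∫ t : ℝ in Ioi 0, Real.log t * Real.exp (-t) : ℝ) : ℂ) := by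
    rw [show ((∫ t : ℝ in Ioi 0, Real.log t * Real.exp (-t) : ℝ) : ℂ)
        = ∫ t : ℝ in Ioi 0, ((Real.log t * Real.exp (-t) : ℝ) : ℂ) from (integral_ofReal).symm]
    congr 1
    ext t
    simp [Complex.cpow_zero]
  rw [heq] at hc
  have hc2 : HasDerivAt Complex.Gamma
      (((∫ t : ℝ in Ioi 0, Real.log t * Real.exp (-t) : ℝ) : ℂ)) 1 := by
    refine hc.congr_of_eventuallyEq ?_
    have : {z : ℂ | 0 < z.re} ∈ nhds (1 : ℂ) := by
      refine (Complex.continuous_re.isOpen_preimage _ isOpen_Ioi).mem_nhds ?_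
      simp
    filter_upwards [this] with z hz
    exact Complex.Gamma_eq_integral hz
  have := hc2.real_of_complex
  simp at this
  exact this

lemma gamma_eq : Real.eulerMascheroniConstant = -∫ t in Set.Ioi (0:ℝ), Real.log t * Real.exp (-t) := by
  have h1 := Real.hasDerivAt_Gamma_one
  have := h1.unique gammaDeriv
  linarith

lemma L_integrable : IntegrableOn (fun t : ℝ => Real.log t * Real.exp (-t)) (Ioi 0) := by
  have h := (mellin_hasDerivAt_of_isBigO_rpow (E := ℂ) (a := 2) (b := 0)
    (f := fun x => ((Real.exp (-x) : ℝ) : ℂ)) (s := 1) ?_ ?_ ?_ ?_ ?_).1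
  · rw [MellinConvergent] at h
    have h2 := h.re
    refine h2.congr ?_
    filter_upwards [ae_restrict_mem measurableSet_Ioi] with t ht
    show (((t:ℂ) ^ ((1:ℂ) - 1) • Real.log t • ((Real.exp (-t) : ℝ) : ℂ))).re = _
    rw [show ((1:ℂ) - 1) = 0 by ring, Complex.cpow_zero, one_smul, Complex.real_smul,
      ← Complex.ofReal_mul, Complex.ofReal_re]
  · refine (Continuous.continuousOn ?_).locallyIntegrableOn measurableSet_Ioi
    exact Complex.continuous_ofReal.comp (Real.continuous_exp.comp continuous_neg)
  · rw [← Asymptotics.isBigO_norm_left]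
    simp_rw [Complex.norm_real,
      Asymptotics.isBigO_norm_left]
    simpa only [neg_one_mul] using (isLittleO_exp_neg_mul_rpow_atTop zero_lt_one _).isBigO
  · norm_num
  · simp_rw [neg_zero, rpow_zero]
    refine Asymptotics.isBigO_const_of_tendsto (?_ : Tendsto _ _ (nhds (1 : ℂ))) one_ne_zero
    rw [(by simp : (1 : ℂ) = Real.exp (-0))]
    exact (Complex.continuous_ofReal.comp
      (Real.continuous_exp.comp continuous_neg)).continuousWithinAt
  · norm_num
noncomputable def binetG (t : ℝ) : ℝ :=
  Real.log (1 - Real.exp (-t)) - Real.exp (-t) * Real.log t - 1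

lemma binetG_deriv {t : ℝ} (ht : 0 < t) :
    HasDerivAt binetG
      ((Real.exp (-t) / (1 - Real.exp (-t)) - Real.exp (-t) / t) + Real.exp (-t) * Real.log t)
      t := by
  have hu1 : Real.exp (-t) < 1 := by
    rw [Real.exp_lt_one_iff]; linarith
  have he : HasDerivAt (fun t : ℝ => Real.exp (-t)) (-Real.exp (-t)) t := by
    simpa [Function.comp_def] using (Real.hasDerivAt_exp (-t)).comp t (hasDerivAt_neg t)
  have h1 : HasDerivAt (fun t : ℝ => 1 - Real.exp (-t)) (Real.exp (-t)) t := by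
    simpa using (he.const_sub 1)
  have h2 : HasDerivAt (fun t : ℝ => Real.log (1 - Real.exp (-t)))
      (Real.exp (-t) / (1 - Real.exp (-t))) t := by
    simpa using h1.log (by linarith)
  have h3 : HasDerivAt (fun t : ℝ => Real.exp (-t) * Real.log t)
      (-Real.exp (-t) * Real.log t + Real.exp (-t) * t⁻¹) t :=
    he.mul (Real.hasDerivAt_log ht.ne')
  have := (h2.sub h3).sub_const 1
  refine HasDerivAt.congr_deriv this ?_
  ring

lemma binetG_top : Tendsto binetG atTop (nhds (-1)) := by
  have hexp : Tendsto (fun t : ℝ => Real.exp (-t)) atTop (nhds 0) := by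
    simpa using Real.tendsto_exp_neg_atTop_nhds_zero
  have h1 : Tendsto (fun t : ℝ => Real.log (1 - Real.exp (-t))) atTop (nhds 0) := by
    have : Tendsto (fun t : ℝ => 1 - Real.exp (-t)) atTop (nhds 1) := by
      simpa using (tendsto_const_nhds.sub hexp)
    simpa [Function.comp_def] using (Real.continuousAt_log one_ne_zero).tendsto.comp this
  have h2 : Tendsto (fun t : ℝ => Real.exp (-t) * Real.log t) atTop (nhds 0) := by
    have hlo : (fun t : ℝ => Real.exp (-t) * Real.log t)
        =o[atTop] fun t : ℝ => Real.exp (-t) * t :=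
      (Asymptotics.isBigO_refl (fun t : ℝ => Real.exp (-t)) atTop).mul_isLittleO
        Real.isLittleO_log_id_atTop
    have hte : Tendsto (fun t : ℝ => Real.exp (-t) * t) atTop (nhds 0) := by
      have := Real.tendsto_pow_mul_exp_neg_atTop_nhds_zero 1
      simpa [mul_comm] using this
    exact hlo.trans_tendsto hte
  have : Tendsto binetG atTop (nhds (0 - 0 - 1)) := (h1.sub h2).sub_const 1
  simpa using this

lemma binetG_zero : Tendsto binetG (nhdsWithin 0 (Ioi 0)) (nhds (-1)) := by
  have hslope : Tendsto (fun t : ℝ => (1 - Real.exp (-t)) / t) (nhdsWithin 0 (Ioi 0))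
      (nhds 1) := by
    have he : HasDerivAt (fun t : ℝ => 1 - Real.exp (-t)) 1 0 := by
      have he' : HasDerivAt (fun t : ℝ => Real.exp (-t)) (-Real.exp (-0)) 0 := by
        simpa [Function.comp_def] using (Real.hasDerivAt_exp (-0)).comp 0 (hasDerivAt_neg 0)
      simpa using he'.const_sub 1
    have := he.tendsto_slope_zero_right
    refine this.congr' ?_
    filter_upwards [self_mem_nhdsWithin] with t (ht : 0 < t)
    simp [div_eq_inv_mul]
  have hlog1 : Tendsto (fun t : ℝ => Real.log ((1 - Real.exp (-t)) / t))
      (nhdsWithin 0 (Ioi 0)) (nhds 0) := by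
    simpa [Function.comp_def] using (Real.continuousAt_log one_ne_zero).tendsto.comp hslope
  have htlogt : Tendsto (fun t : ℝ => t * Real.log t) (nhdsWithin 0 (Ioi 0)) (nhds 0) := by
    have := tendsto_log_mul_rpow_nhdsGT_zero zero_lt_one
    simpa [mul_comm] using this
  have h2 : Tendsto (fun t : ℝ => ((1 - Real.exp (-t)) / t) * (t * Real.log t))
      (nhdsWithin 0 (Ioi 0)) (nhds 0) := by
    simpa using hslope.mul htlogt
  have : Tendsto (fun t : ℝ => Real.log ((1 - Real.exp (-t)) / t)
      + ((1 - Real.exp (-t)) / t) * (t * Real.log t) - 1)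
      (nhdsWithin 0 (Ioi 0)) (nhds (0 + 0 - 1)) := (hlog1.add h2).sub_const 1
  refine (this.congr' ?_).mono_right (by norm_num)
  filter_upwards [self_mem_nhdsWithin] with t (ht : 0 < t)
  have hu1 : Real.exp (-t) < 1 := by rw [Real.exp_lt_one_iff]; linarith
  have hpos : 0 < 1 - Real.exp (-t) := by linarith
  rw [Real.log_div hpos.ne' ht.ne']
  unfold binetG
  field_simp
  ring

lemma binet_bounds {t : ℝ} (ht : 0 < t) :
    0 ≤ Real.exp (-t) / (1 - Real.exp (-t)) - Real.exp (-t) / t ∧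
      Real.exp (-t) / (1 - Real.exp (-t)) - Real.exp (-t) / t ≤ Real.exp (-t) := by
  set u := Real.exp (-t) with hu
  have hu0 : 0 < u := Real.exp_pos _
  have hu1 : u < 1 := by rw [hu, Real.exp_lt_one_iff]; linarith
  have hb1 : 1 - t ≤ u := by
    have := Real.add_one_le_exp (-t); linarith
  have hb2 : (t + 1) * u ≤ 1 := by
    have h := Real.add_one_le_exp t
    have : (t + 1) * u ≤ Real.exp t * u := by nlinarith
    rw [hu, ← Real.exp_add] at this
    simpa using this
  have h1u : 0 < 1 - u := by linarith
  rw [div_sub_div u u h1u.ne' ht.ne']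
  constructor
  · apply div_nonneg _ (by positivity)
    nlinarith
  · rw [div_le_iff₀ (by positivity)]
    nlinarith

lemma binet_integrand_integrable :
    IntegrableOn (fun t : ℝ =>
      Real.exp (-t) / (1 - Real.exp (-t)) - Real.exp (-t) / t) (Ioi 0) := by
  have hcont : ContinuousOn (fun t : ℝ =>
      Real.exp (-t) / (1 - Real.exp (-t)) - Real.exp (-t) / t) (Ioi 0) := by
    apply ContinuousOn.sub
    · apply ContinuousOn.div
      · exact (Real.continuous_exp.comp continuous_neg).continuousOn
      · exact (continuous_const.sub (Real.continuous_exp.comp continuous_neg)).continuousOn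
      · intro t ht
        have : Real.exp (-t) < 1 := by rw [Real.exp_lt_one_iff]; simpa using ht
        linarith
    · exact ContinuousOn.div (Real.continuous_exp.comp continuous_neg).continuousOn
        continuousOn_id (fun t ht => ne_of_gt ht)
  refine Integrable.mono (exp_neg_integrableOn_Ioi 0 one_pos)
    (hcont.aestronglyMeasurable measurableSet_Ioi) ?_
  filter_upwards [ae_restrict_mem measurableSet_Ioi] with t ht
  obtain ⟨hl, hr⟩ := binet_bounds ht
  rw [Real.norm_eq_abs, Real.norm_eq_abs, abs_of_nonneg hl, abs_of_nonneg (Real.exp_pos _).le]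
  simpa using hr

lemma L'_integrable : IntegrableOn (fun t : ℝ => Real.exp (-t) * Real.log t) (Ioi 0) := by
  rw [show (fun t : ℝ => Real.exp (-t) * Real.log t)
      = fun t : ℝ => Real.log t * Real.exp (-t) from funext fun t => mul_comm _ _]
  exact L_integrable

/-- Binet's formula for Euler's constant:
`γ = ∫₀^∞ (e^{−x}/(1−e^{−x}) − e^{−x}/x) dx`. -/
theorem binet_eulerMascheroni :
    Real.eulerMascheroniConstant =
      ∫ x in Set.Ioi (0:ℝ),
        (Real.exp (-x) / (1 - Real.exp (-x)) - Real.exp (-x) / x) := by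
  have hcont0 : ContinuousWithinAt binetG (Ici 0) 0 := by
    have h0 : binetG 0 = -1 := by simp [binetG]
    rw [ContinuousWithinAt, h0, ← Set.Ioi_insert, nhdsWithin_insert]
    rw [tendsto_sup]
    exact ⟨by simpa [h0] using (tendsto_pure_nhds binetG 0), binetG_zero⟩
  have hint : IntegrableOn (fun t : ℝ =>
      (Real.exp (-t) / (1 - Real.exp (-t)) - Real.exp (-t) / t)
        + Real.exp (-t) * Real.log t) (Ioi 0) :=
    binet_integrand_integrable.add L'_integrable
  have key := integral_Ioi_of_hasDerivAt_of_tendsto hcont0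
    (fun x hx => binetG_deriv hx) hint binetG_top
  have h0 : binetG 0 = -1 := by simp [binetG]
  rw [h0] at key
  rw [integral_add binet_integrand_integrable L'_integrable] at key
  have hL : (∫ t in Set.Ioi (0:ℝ), Real.exp (-t) * Real.log t)
      = ∫ t in Set.Ioi (0:ℝ), Real.log t * Real.exp (-t) := by
    simp_rw [mul_comm]
  rw [hL] at key
  rw [gamma_eq]
  linarith
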